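/- arXiv:0810.1135 — 4 statements merged into one kernel-verified Lean document; each statement's English description precedes it below -/
import Mathlib

section
/- An ℝ-linear map φ : ℍ → ℍ satisfies φ ∘ φ = -id and commutes with right multiplication R_w for every w ∈ ℍ if and only if φ = L_q (left multiplication by q) for a purely imaginary quaternion q with ‖q‖ = 1; moreover such q is unique. (This identifies the twistor fiber SO(4)/U(2) of complex structures compatible with metric and orientation with the unit 2-sphere of imaginary quaternions.) -/
lemma imaginary_unit_iff_sq (q : Quaternion ℝ) :
    (q.re = 0 ∧ ‖q‖ = 1) ↔ q * q = -1 := by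
  constructor
  · rintro ⟨hre, hnorm⟩
    have h1 : q.imI ^ 2 + q.imJ ^ 2 + q.imK ^ 2 = 1 := by
      have := Quaternion.normSq_eq_norm_mul_self q
      rw [hnorm] at this
      rw [Quaternion.normSq_def', hre] at this
      nlinarith [this]
    ext <;> simp [Quaternion.re_mul, Quaternion.imI_mul, Quaternion.imJ_mul,
      Quaternion.imK_mul, hre, Quaternion.re_one, Quaternion.imI_one, Quaternion.imJ_one, Quaternion.imK_one] <;> nlinarith [h1]
  · intro h
    have hre : (q * q).re = -1 := by rw [h]; simp [Quaternion.re_one]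
    have e1 : q.re * q.re - q.imI * q.imI - q.imJ * q.imJ - q.imK * q.imK = -1 := by
      simpa [Quaternion.re_mul] using hre
    have eI : (q * q).imI = 0 := by rw [h]; simp [Quaternion.imI_one]
    have eJ : (q * q).imJ = 0 := by rw [h]; simp [Quaternion.imJ_one]
    have eK : (q * q).imK = 0 := by rw [h]; simp [Quaternion.imK_one]
    simp only [Quaternion.imI_mul, Quaternion.imJ_mul, Quaternion.imK_mul] at eI eJ eK
    have hre0 : q.re = 0 := by
      by_contra hre0
      have hI : q.imI = 0 := by
        have h2 : q.re * q.imI = 0 := by linarith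
        exact (mul_eq_zero.mp h2).resolve_left hre0
      have hJ : q.imJ = 0 := by
        have h2 : q.re * q.imJ = 0 := by linarith
        exact (mul_eq_zero.mp h2).resolve_left hre0
      have hK : q.imK = 0 := by
        have h2 : q.re * q.imK = 0 := by linarith
        exact (mul_eq_zero.mp h2).resolve_left hre0
      rw [hI, hJ, hK] at e1
      nlinarith [e1, sq_nonneg q.re]
    refine ⟨hre0, ?_⟩
    have hn : Quaternion.normSq q = 1 := by
      rw [Quaternion.normSq_def', hre0]
      nlinarith [e1, hre0]
    have := Quaternion.normSq_eq_norm_mul_self q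
    rw [hn] at this
    nlinarith [norm_nonneg q, this]

/-- An `ℝ`-linear map `φ : ℍ → ℍ` satisfies `φ ∘ φ = -id` and commutes with every
right multiplication if and only if it is left multiplication by a (unique) purely
imaginary unit quaternion: this identifies the twistor fiber `SO(4)/U(2)` with the
unit 2-sphere of imaginary quaternions. -/
theorem complex_structure_iff_left_mul_imaginary_unit
    (φ : Quaternion ℝ →ₗ[ℝ] Quaternion ℝ) :
    ((∀ x, φ (φ x) = -x) ∧ ∀ (w x : Quaternion ℝ), φ (x * w) = φ x * w) ↔
    ∃! q : Quaternion ℝ, q.re = 0 ∧ ‖q‖ = 1 ∧ ∀ x, φ x = q * x := by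
  constructor
  · rintro ⟨hsq, hcomm⟩
    set q := φ 1 with hq
    have hφ : ∀ x, φ x = q * x := by
      intro x
      have := hcomm x 1
      simpa using this
    have hq2 : q * q = -1 := by
      have := hsq 1
      rw [hφ (φ 1), hφ 1] at this
      simpa [mul_assoc] using this
    obtain ⟨hre, hnorm⟩ := (imaginary_unit_iff_sq q).mpr hq2
    refine ⟨q, ⟨hre, hnorm, hφ⟩, ?_⟩
    rintro r ⟨-, -, hr⟩
    have := hr 1
    rw [hφ 1] at this
    simpa using this.symm
  · rintro ⟨q, ⟨hre, hnorm, hφ⟩, -⟩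
    have hq2 : q * q = -1 := (imaginary_unit_iff_sq q).mp ⟨hre, hnorm⟩
    constructor
    · intro x
      rw [hφ, hφ, ← mul_assoc, hq2]
      simp
    · intro w x
      rw [hφ, hφ, mul_assoc]
end

section
/- Let A be an ℝ-linear endomorphism of the 3-dimensional real inner product space of purely imaginary quaternions which is self-adjoint (⟨A(x), y⟩ = ⟨x, A(y)⟩ for all purely imaginary x, y). If the quaternion commutators satisfy [A(j) + i·A(k), i] = 0, [A(i) - j·A(k), j] = 0 and [A(i) + k·A(j), k] = 0 (all products and commutators taken in ℍ), then A is a real scalar multiple of the identity. (This is the algebraic core of the converse direction of Theorem B: if the twistor almost complex structure 𝕁_Id is integrable then the self-dual curvature operator A = W⁺ + s/12·Id is a homothety, i.e. the metric is anti-selfdual.) -/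
/-- The imaginary quaternion unit `i`. -/
noncomputable def qi : Quaternion ℝ := ⟨0, 1, 0, 0⟩

/-- The imaginary quaternion unit `j`. -/
noncomputable def qj : Quaternion ℝ := ⟨0, 0, 1, 0⟩

/-- The imaginary quaternion unit `k`. -/
noncomputable def qk : Quaternion ℝ := ⟨0, 0, 0, 1⟩

/-- Algebraic core of the converse direction of Theorem B: a self-adjoint
endomorphism `A` of the space of purely imaginary quaternions satisfying the
commutator relations `[A(j) + i·A(k), i] = [A(i) - j·A(k), j] = [A(i) + k·A(j), k] = 0`
is a real scalar multiple of the identity. -/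
theorem selfadjoint_commutator_relations_imp_homothety
    (A : Quaternion ℝ →ₗ[ℝ] Quaternion ℝ)
    (him : ∀ x : Quaternion ℝ, x.re = 0 → (A x).re = 0)
    (hsym : ∀ x y : Quaternion ℝ, x.re = 0 → y.re = 0 →
      (inner ℝ (A x) y : ℝ) = (inner ℝ x (A y) : ℝ))
    (h1 : (A qj + qi * A qk) * qi - qi * (A qj + qi * A qk) = 0)
    (h2 : (A qi - qj * A qk) * qj - qj * (A qi - qj * A qk) = 0)
    (h3 : (A qi + qk * A qj) * qk - qk * (A qi + qk * A qj) = 0) :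
    ∃ c : ℝ, ∀ x : Quaternion ℝ, x.re = 0 → A x = c • x := by
  have hi : (qi:Quaternion ℝ).re = 0 := rfl
  have hj : (qj:Quaternion ℝ).re = 0 := rfl
  have hk : (qk:Quaternion ℝ).re = 0 := rfl
  have hai := him qi hi
  have haj := him qj hj
  have hak := him qk hk
  have s12 := hsym qi qj hi hj
  have s13 := hsym qi qk hi hk
  have s23 := hsym qj qk hj hk
  simp only [Quaternion.inner_def, Quaternion.re_mul, Quaternion.re_star,
    Quaternion.imI_star, Quaternion.imJ_star, Quaternion.imK_star] at s12 s13 s23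
  simp only [Quaternion.inner_def, Quaternion.re_mul, Quaternion.re_star,
    Quaternion.imI_star, Quaternion.imJ_star, Quaternion.imK_star, qi, qj, qk,
    mul_zero, mul_one, zero_mul, neg_zero, neg_neg, zero_add, add_zero, sub_zero,
    zero_sub, mul_neg] at s12 s13 s23
  rw [Quaternion.ext_iff] at h1 h2 h3
  simp only [Quaternion.imI_add, Quaternion.imI_mul, Quaternion.imI_sub,
    Quaternion.imJ_add, Quaternion.imJ_mul, Quaternion.imJ_sub,
    Quaternion.imK_add, Quaternion.imK_mul, Quaternion.imK_sub,
    Quaternion.re_add, Quaternion.re_mul, Quaternion.re_sub, Quaternion.re_zero,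
    Quaternion.imI_zero, Quaternion.imJ_zero, Quaternion.imK_zero] at h1 h2 h3
  simp only [qi, qj, qk, Quaternion.imI_add, Quaternion.imI_mul, Quaternion.imI_sub,
    Quaternion.imJ_add, Quaternion.imJ_mul, Quaternion.imJ_sub,
    Quaternion.imK_add, Quaternion.imK_mul, Quaternion.imK_sub,
    Quaternion.re_add, Quaternion.re_mul, Quaternion.re_sub, Quaternion.re_zero,
    Quaternion.imI_zero, Quaternion.imJ_zero, Quaternion.imK_zero,
    mul_zero, mul_one, zero_mul, neg_zero, zero_add, add_zero, sub_zero, mul_neg] at h1 h2 h3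
  obtain ⟨h1a, h1b, h1c, h1d⟩ := h1
  obtain ⟨h2a, h2b, h2c, h2d⟩ := h2
  obtain ⟨h3a, h3b, h3c, h3d⟩ := h3
  simp only [qi, qj, qk] at hai haj hak
  obtain ⟨c, hAi, hAj, hAk⟩ : ∃ c : ℝ, A qi = c • qi ∧ A qj = c • qj ∧ A qk = c • qk := by
    refine ⟨(A qi).imI, ?_, ?_, ?_⟩
    · ext <;> simp only [Quaternion.re_smul, Quaternion.imI_smul,
        Quaternion.imJ_smul, Quaternion.imK_smul] <;> simp only [qi, qj, qk, Quaternion.re_smul, Quaternion.imI_smul,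
        Quaternion.imJ_smul, Quaternion.imK_smul, smul_eq_mul, mul_zero, mul_one] <;> linarith
    · ext <;> simp only [Quaternion.re_smul, Quaternion.imI_smul,
        Quaternion.imJ_smul, Quaternion.imK_smul] <;> simp only [qi, qj, qk, Quaternion.re_smul, Quaternion.imI_smul,
        Quaternion.imJ_smul, Quaternion.imK_smul, smul_eq_mul, mul_zero, mul_one] <;> linarith
    · ext <;> simp only [Quaternion.re_smul, Quaternion.imI_smul,
        Quaternion.imJ_smul, Quaternion.imK_smul] <;> simp only [qi, qj, qk, Quaternion.re_smul, Quaternion.imI_smul,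
        Quaternion.imJ_smul, Quaternion.imK_smul, smul_eq_mul, mul_zero, mul_one] <;> linarith
  refine ⟨c, fun x hx => ?_⟩
  have hx' : x = x.imI • qi + x.imJ • qj + x.imK • qk := by
    ext <;> simp [hx] <;> simp [qi, qj, qk]
  rw [hx', map_add, map_add, map_smul, map_smul, map_smul, hAi, hAj, hAk]
  module
end

section
/- Let q be a purely imaginary quaternion with ‖q‖ = 1. For all x, y ∈ ℍ, each of the skew-adjoint endomorphisms x∧y - (q·x)∧(q·y) and (q·x)∧y + x∧(q·y) of ℍ equals left multiplication L_p by some purely imaginary quaternion p (equivalently, commutes with every right multiplication R_w). (This is the claim in the proof of Theorem B that the bivectors θᵢ∧θⱼ - Qθᵢ∧Qθⱼ and Qθᵢ∧θⱼ + θᵢ∧Qθⱼ are self-dual when Q preserves the orientation.) -/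
/-- The bivector `x ∧ y` of two quaternions: the skew-adjoint endomorphism
`v ↦ ⟨x, v⟩ • y - ⟨y, v⟩ • x` of `ℍ`. -/
noncomputable def wedgeQ (x y v : Quaternion ℝ) : Quaternion ℝ :=
  (inner ℝ x v : ℝ) • y - (inner ℝ y v : ℝ) • x

/-- For a purely imaginary unit quaternion `q`, the endomorphisms
`x∧y - (q·x)∧(q·y)` and `(q·x)∧y + x∧(q·y)` of `ℍ` are left multiplications by
purely imaginary quaternions (i.e. these bivectors are self-dual): the claim in
the proof of Theorem B that `θᵢ∧θⱼ - Qθᵢ∧Qθⱼ` and `Qθᵢ∧θⱼ + θᵢ∧Qθⱼ` lie in `Λ⁺`. -/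
theorem selfdual_bivectors (q : Quaternion ℝ) (hq : q.re = 0) (hnorm : ‖q‖ = 1)
    (x y : Quaternion ℝ) :
    (∃ p : Quaternion ℝ, p.re = 0 ∧
      ∀ v, wedgeQ x y v - wedgeQ (q * x) (q * y) v = p * v) ∧
    (∃ p : Quaternion ℝ, p.re = 0 ∧
      ∀ v, wedgeQ (q * x) y v + wedgeQ x (q * y) v = p * v) := by
  have hn : q.imI ^ 2 + q.imJ ^ 2 + q.imK ^ 2 = 1 := by
    have h2 : Quaternion.normSq q = ‖q‖ * ‖q‖ := Quaternion.normSq_eq_norm_mul_self q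
    rw [hnorm] at h2
    have := Quaternion.normSq_def' q
    rw [hq] at this
    nlinarith [this, h2]
  constructor
  · refine ⟨wedgeQ x y 1 - wedgeQ (q * x) (q * y) 1, ?_, ?_⟩
    · simp only [wedgeQ, Quaternion.inner_def, Quaternion.re_sub, Quaternion.re_smul,
        Quaternion.re_mul, Quaternion.re_star, Quaternion.imI_star, Quaternion.imJ_star,
        Quaternion.imK_star, Quaternion.re_one, Quaternion.imI_one, Quaternion.imJ_one,
        Quaternion.imK_one, Quaternion.imI_mul, Quaternion.imJ_mul, Quaternion.imK_mul]
      rw [hq]; simp only [smul_eq_mul]; ring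
    · intro v
      ext <;>
        simp only [wedgeQ, Quaternion.inner_def, Quaternion.re_sub, Quaternion.imI_sub,
          Quaternion.imJ_sub, Quaternion.imK_sub, Quaternion.re_smul, Quaternion.imI_smul,
          Quaternion.imJ_smul, Quaternion.imK_smul, Quaternion.re_mul, Quaternion.imI_mul,
          Quaternion.imJ_mul, Quaternion.imK_mul, Quaternion.re_star, Quaternion.imI_star,
          Quaternion.imJ_star, Quaternion.imK_star, Quaternion.re_one, Quaternion.imI_one,
          Quaternion.imJ_one, Quaternion.imK_one, smul_eq_mul, hq]
      · ring
      · linear_combination (- x.imK * y.imI * v.imK + x.imK * y.re * v.imJ - x.imJ * y.imI * v.imJ - x.imJ * y.re * v.imK + x.imI * y.imK * v.imK + x.imI * y.imJ * v.imJ - x.re * y.imK * v.imJ + x.re * y.imJ * v.imK) * hn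
      · linear_combination (- x.imK * y.imJ * v.imK - x.imK * y.re * v.imI + x.imJ * y.imK * v.imK + x.imJ * y.imI * v.imI - x.imI * y.imJ * v.imI + x.imI * y.re * v.imK + x.re * y.imK * v.imI - x.re * y.imI * v.imK) * hn
      · linear_combination (x.imK * y.imJ * v.imJ + x.imK * y.imI * v.imI - x.imJ * y.imK * v.imJ + x.imJ * y.re * v.imI - x.imI * y.imK * v.imI - x.imI * y.re * v.imJ - x.re * y.imJ * v.imI + x.re * y.imI * v.imJ) * hn
  · refine ⟨wedgeQ (q * x) y 1 + wedgeQ x (q * y) 1, ?_, ?_⟩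
    · simp only [wedgeQ, Quaternion.inner_def, Quaternion.re_add, Quaternion.re_sub,
        Quaternion.re_smul, Quaternion.re_mul, Quaternion.re_star, Quaternion.imI_star,
        Quaternion.imJ_star, Quaternion.imK_star, Quaternion.re_one, Quaternion.imI_one,
        Quaternion.imJ_one, Quaternion.imK_one, Quaternion.imI_mul, Quaternion.imJ_mul,
        Quaternion.imK_mul]
      rw [hq]; simp only [smul_eq_mul]; ring
    · intro v
      ext <;>
        simp only [wedgeQ, Quaternion.inner_def, Quaternion.re_add, Quaternion.imI_add,
          Quaternion.imJ_add, Quaternion.imK_add, Quaternion.re_sub, Quaternion.imI_sub,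
          Quaternion.imJ_sub, Quaternion.imK_sub, Quaternion.re_smul, Quaternion.imI_smul,
          Quaternion.imJ_smul, Quaternion.imK_smul, Quaternion.re_mul, Quaternion.imI_mul,
          Quaternion.imJ_mul, Quaternion.imK_mul, Quaternion.re_star, Quaternion.imI_star,
          Quaternion.imJ_star, Quaternion.imK_star, Quaternion.re_one, Quaternion.imI_one,
          Quaternion.imJ_one, Quaternion.imK_one, smul_eq_mul, hq] <;> ring
end

section
/- For a purely imaginary quaternion Q with ‖Q‖ = 1, the commutator [i - Q·k, Q] vanishes if and only if Q = j. (This is the algebraic core of Theorem E: for an anti-selfdual metric with nowhere-zero scalar curvature, the vanishing of the vertical Nijenhuis tensor forces f(m,Q) = Q, so 𝕁_Id is, even locally, the only integrable compatible complex structure on the twistor space.) -/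
/-- Algebraic core of Theorem E: for a purely imaginary unit quaternion `Q`, the
commutator `[i - Q·k, Q]` vanishes if and only if `Q = j`; hence for an
anti-selfdual metric with nowhere-zero scalar curvature, `𝕁_Id` is, even locally,
the only integrable compatible complex structure on the twistor space. -/
theorem commutator_vanishes_iff_eq_j (Q : Quaternion ℝ) (him : Q.re = 0)
    (hnorm : ‖Q‖ = 1) :
    (qi - Q * qk) * Q - Q * (qi - Q * qk) = 0 ↔ Q = qj := by
  have hns : Q.re ^ 2 + Q.imI ^ 2 + Q.imJ ^ 2 + Q.imK ^ 2 = 1 := by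
    have h := Quaternion.normSq_eq_norm_mul_self (a := Q)
    rw [hnorm] at h
    have := Quaternion.normSq_def' Q
    nlinarith [h, this]
  constructor
  · intro h
    rw [Quaternion.ext_iff] at h ⊢
    simp only [Quaternion.re_mul, Quaternion.imI_mul, Quaternion.imJ_mul,
      Quaternion.imK_mul, Quaternion.re_sub, Quaternion.imI_sub, Quaternion.imJ_sub,
      Quaternion.imK_sub, Quaternion.re_zero, Quaternion.imI_zero, Quaternion.imJ_zero,
      Quaternion.imK_zero, him] at h
    simp only [qi, qj, qk] at h
    obtain ⟨h1, h2, h3, h4⟩ := h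
    ring_nf at h2 h3 h4
    have hb : Q.imK * Q.imJ = Q.imK := by linarith
    have hb2 : (Q.imK * Q.imJ) ^ 2 = Q.imK ^ 2 := by rw [hb]
    have hc2 : Q.imK ^ 2 = 0 := by
      nlinarith [hns, hb2, sq_nonneg (Q.imI * Q.imK), sq_nonneg (Q.imK ^ 2), sq_nonneg Q.imK]
    have hc : Q.imK = 0 := sq_eq_zero_iff.mp hc2
    have hb1 : Q.imJ = 1 := by nlinarith [hns, h4, hc2]
    have ha : Q.imI = 0 := by
      have : Q.imI ^ 2 = 0 := by nlinarith [hns, hc2, hb1]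
      exact sq_eq_zero_iff.mp this
    exact ⟨him, ha, hb1, hc⟩
  · rintro rfl
    rw [Quaternion.ext_iff]
    simp only [Quaternion.re_mul, Quaternion.imI_mul, Quaternion.imJ_mul, Quaternion.imK_mul,
      Quaternion.re_sub, Quaternion.imI_sub, Quaternion.imJ_sub, Quaternion.imK_sub, Quaternion.re_zero, Quaternion.imI_zero, Quaternion.imJ_zero,
      Quaternion.imK_zero]
    simp [qi, qj, qk]
end
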